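/- arXiv:1602.03155 — 4 statements merged into one kernel-verified Lean document; each statement's English description precedes it below -/
import Mathlib

section
/- Lemma 3.4. Let Ω be an open subset of ℝ^d, d ≥ 1, let E ⊆ Ω be a Lebesgue measurable set of positive Lebesgue measure, and let E⁰ ⊆ E denote the set of points of positive Lebesgue density in E, i.e. the set of x ∈ E such that the Lebesgue measure of E ∩ V is positive for every neighborhood V of x. Then: (a) every smooth real-valued function f ∈ C^∞(Ω) which vanishes on E⁰ is flat at E⁰, i.e. ∂^α f(x) = 0 for every multi-index α ∈ ℕ^d and every x ∈ E⁰; (b) the Lebesgue measure of E ∖ E⁰ is zero. -/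
open MeasureTheory Set

noncomputable section

open Metric Filter Asymptotics

set_option maxHeartbeats 1000000 in
/-- Core analytic lemma: if `g` vanishes on `s`, is differentiable at `x ∈ s`, and `s` has
Lebesgue density one at `x`, then the derivative of `g` at `x` vanishes. -/
lemma fderiv_eq_zero_of_density_one {d : ℕ} (hd : 1 ≤ d) {F : Type*} [NormedAddCommGroup F]
    [NormedSpace ℝ F]
    {s : Set (Fin d → ℝ)} {g : (Fin d → ℝ) → F} {x : Fin d → ℝ} (hx : x ∈ s)
    (hdiff : DifferentiableAt ℝ g x) (hg : ∀ y ∈ s, g y = 0)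
    (hdens : Filter.Tendsto (fun r => volume (s ∩ closedBall x r) / volume (closedBall x r))
      (nhdsWithin 0 (Set.Ioi 0)) (nhds 1)) :
    fderiv ℝ g x = 0 := by
  by_contra hL
  set L := fderiv ℝ g x with hLdef
  obtain ⟨u, hu⟩ : ∃ u, L u ≠ 0 := by
    by_contra h
    push_neg at h
    exact hL (ContinuousLinearMap.ext fun u => by simp [h u])
  have hu0 : u ≠ 0 := fun h => hu (by simp [h])
  set v : Fin d → ℝ := ‖u‖⁻¹ • u with hvdef
  have hv : ‖v‖ = 1 := by
    rw [hvdef, norm_smul, norm_inv, norm_norm, inv_mul_cancel₀ (norm_ne_zero_iff.mpr hu0)]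
  set c := ‖L v‖ with hcdef
  have hc : 0 < c := by
    rw [hcdef]
    have h1 : L v = ‖u‖⁻¹ • L u := by rw [hvdef]; exact L.map_smul _ _
    rw [h1, norm_smul]
    have : ‖u‖⁻¹ ≠ 0 := inv_ne_zero (norm_ne_zero_iff.mpr hu0)
    exact mul_pos (norm_pos_iff.mpr this) (norm_pos_iff.mpr hu)
  have hcL : c ≤ ‖L‖ := by
    have := L.le_opNorm v
    rwa [hv, mul_one] at this
  have hLpos : 0 < ‖L‖ := lt_of_lt_of_le hc hcL
  set δ := c / (4 * ‖L‖) with hδdef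
  have hδ : 0 < δ := by positivity
  have hδ4 : δ ≤ 1 / 4 := by
    rw [hδdef, div_le_div_iff₀ (by positivity) (by norm_num)]
    nlinarith
  -- little-o estimate
  have hlo : (fun y => g y - g x - L (y - x)) =o[nhds x] fun y => y - x :=
    hdiff.hasFDerivAt.isLittleO
  have hev := hlo.def (show (0:ℝ) < c/4 by positivity)
  rw [Metric.eventually_nhds_iff] at hev
  obtain ⟨ε, hε, hball⟩ := hev
  set r0 := ε / 2 with hr0def
  have hr0 : 0 < r0 := by positivity
  have hkey : ∀ y ∈ s, ‖y - x‖ ≤ r0 → ‖L (y - x)‖ ≤ c / 4 * ‖y - x‖ := by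
    intro y hy hyr
    have h1 : dist y x < ε := by
      rw [dist_eq_norm]; linarith
    have h2 := hball h1
    have h0 : ‖L (y - x)‖ = ‖g y - g x - L (y - x)‖ := by
      rw [hg y hy, hg x hx]; simp [norm_sub_rev]
    rw [h0]; exact h2
  -- the ball on which `s` cannot enter
  have hempty : ∀ r : ℝ, 0 < r → r ≤ r0 / 2 → s ∩ closedBall (x + r • v) (δ * r) = ∅ := by
    intro r hr hrr
    ext y
    simp only [mem_inter_iff, mem_closedBall, mem_empty_iff_false, iff_false, not_and]
    intro hy hyD
    rw [dist_eq_norm] at hyD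
    have h1 : ‖y - x‖ ≤ 2 * r := by
      have heq : y - x = (y - (x + r • v)) + r • v := by abel
      rw [heq]
      calc ‖(y - (x + r • v)) + r • v‖ ≤ ‖y - (x + r • v)‖ + ‖r • v‖ := norm_add_le _ _
        _ ≤ δ * r + r := by
            rw [norm_smul, hv, mul_one, Real.norm_eq_abs, abs_of_pos hr]
            linarith
        _ ≤ 2 * r := by nlinarith
    have h2 := hkey y hy (by linarith)
    have hsplit : L (r • v) = L (y - x) - L (y - (x + r • v)) := by
      rw [← map_sub]; congr 1; abel
    have hLrv : ‖L (r • v)‖ = c * r := by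
      rw [L.map_smul, norm_smul, Real.norm_eq_abs, abs_of_pos hr, hcdef]; ring
    have hLrest : ‖L (y - (x + r • v))‖ ≤ ‖L‖ * (δ * r) :=
      le_trans (L.le_opNorm _) (by gcongr)
    have hrest' : ‖L‖ * (δ * r) = c * r / 4 := by
      rw [hδdef]; field_simp
    have h4 : ‖L (r • v)‖ ≤ ‖L (y - x)‖ + ‖L (y - (x + r • v))‖ := by
      rw [hsplit]; exact norm_sub_le _ _
    have h5 : ‖L (y - x)‖ ≤ c / 4 * (2 * r) :=
      le_trans h2 (mul_le_mul_of_nonneg_left h1 (by positivity))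
    rw [hLrv] at h4
    rw [hrest'] at hLrest
    have hcr : 0 < c * r := mul_pos hc hr
    linarith
  -- measure estimate
  set I := volume (ball (0 : Fin d → ℝ) 1) with hIdef
  set θ : ENNReal := ENNReal.ofReal ((δ / 2) ^ d) with hθdef
  have hθpos : 0 < θ := by
    rw [hθdef]
    exact ENNReal.ofReal_pos.mpr (by positivity)
  have hθlt : θ < 1 := by
    rw [hθdef]
    have : (δ / 2) ^ d < 1 :=
      pow_lt_one₀ (by positivity) (by linarith) (by omega)
    calc ENNReal.ofReal ((δ/2)^d) < ENNReal.ofReal 1 :=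
          ENNReal.ofReal_lt_ofReal_iff (by norm_num) |>.mpr this
      _ = 1 := ENNReal.ofReal_one
  have hub : ∀ r' : ℝ, 0 < r' → r' ≤ r0 →
      volume (s ∩ closedBall x r') / volume (closedBall x r') ≤ 1 - θ := by
    intro r' hr' hr'0
    set r := r' / 2 with hrdef
    have hr : 0 < r := by positivity
    set B := closedBall x r' with hBdef
    set D := closedBall (x + r • v) (δ * r) with hDdef
    have hDB : D ⊆ B := by
      intro z hz
      rw [hDdef, mem_closedBall, dist_eq_norm] at hz
      rw [hBdef, mem_closedBall, dist_eq_norm]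
      have heq : z - x = (z - (x + r • v)) + r • v := by abel
      rw [heq]
      calc ‖(z - (x + r • v)) + r • v‖ ≤ ‖z - (x + r • v)‖ + ‖r • v‖ := norm_add_le _ _
        _ ≤ δ * r + r := by
            rw [norm_smul, hv, mul_one, Real.norm_eq_abs, abs_of_pos hr]
            linarith
        _ ≤ r' := by
            have hδr : δ * r ≤ r := by
              have := mul_le_mul_of_nonneg_right (show δ ≤ 1 by linarith) hr.le
              simpa using this
            rw [hrdef] at hδr ⊢
            linarith
    have hsD : s ∩ D = ∅ := hempty r hr (by rw [hrdef]; linarith)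
    have hBpos : 0 < volume B := measure_closedBall_pos volume x hr'
    have hBtop : volume B ≠ ⊤ := measure_closedBall_lt_top.ne
    have hDmeas : MeasurableSet D := measurableSet_closedBall
    have hdisj : Disjoint (s ∩ B) D := by
      rw [Set.disjoint_left]
      intro z hz hzD
      have : z ∈ s ∩ D := ⟨hz.1, hzD⟩
      rw [hsD] at this
      exact this
    have hsum : volume (s ∩ B) + volume D ≤ volume B := by
      rw [← measure_union hdisj hDmeas]
      exact measure_mono (union_subset inter_subset_right hDB)
    -- volume D = θ * volume B
    have hvolD : volume D = θ * volume B := by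
      rw [hDdef, hBdef, Measure.addHaar_closedBall _ _ (by positivity : (0:ℝ) ≤ δ * r),
        Measure.addHaar_closedBall _ _ hr'.le]
      have hfr : Module.finrank ℝ (Fin d → ℝ) = d := Module.finrank_fin_fun ℝ
      rw [hfr, hθdef, ← mul_assoc, ← ENNReal.ofReal_mul (by positivity)]
      congr 2
      have : r' = 2 * r := by rw [hrdef]; ring
      rw [this]
      ring
    have hle : volume (s ∩ B) ≤ (1 - θ) * volume B := by
      have h1 : θ * volume B ≠ ⊤ := by
        rw [← hvolD]
        exact ((measure_mono hDB).trans_lt hBtop.lt_top).ne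
      have hDtop : volume D ≠ ⊤ := ((measure_mono hDB).trans_lt hBtop.lt_top).ne
      have h2 : volume (s ∩ B) ≤ volume B - θ * volume B := by
        rw [← hvolD]
        exact ENNReal.le_sub_of_add_le_right hDtop hsum
      have h3 : (1 - θ) * volume B = volume B - θ * volume B := by
        rw [ENNReal.sub_mul (fun _ _ => hBtop), one_mul]
      rw [h3]; exact h2
    rw [ENNReal.div_le_iff hBpos.ne' hBtop]
    exact hle
  have hev2 : ∀ᶠ r' in nhdsWithin 0 (Set.Ioi 0),
      volume (s ∩ closedBall x r') / volume (closedBall x r') ≤ 1 - θ := by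
    filter_upwards [Ioc_mem_nhdsGT_of_mem (Set.mem_Ico.mpr ⟨le_refl 0, hr0⟩)] with r' hr'
    exact hub r' hr'.1 hr'.2
  have hfin : (1 : ENNReal) ≤ 1 - θ := le_of_tendsto hdens hev2
  have : (1 : ENNReal) - θ < 1 := ENNReal.sub_lt_self ENNReal.one_ne_top one_ne_zero hθpos.ne'
  exact absurd hfin (not_le.mpr this)

/-- The set of points of positive Lebesgue density of `E` : the points `x ∈ E` such that
every neighbourhood of `x` meets `E` in a set of positive Lebesgue measure. -/
def posDensity {d : ℕ} (E : Set (Fin d → ℝ)) : Set (Fin d → ℝ) :=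
  {x ∈ E | ∀ V ∈ nhds x, 0 < volume (E ∩ V)}

lemma posDensity_eq_everywherePosSubset {d : ℕ} (E : Set (Fin d → ℝ)) :
    posDensity E = (volume : Measure (Fin d → ℝ)).everywherePosSubset E := by
  ext x
  simp only [posDensity, Measure.everywherePosSubset, mem_setOf_eq, mem_sep_iff]
  constructor
  · rintro ⟨hx, h⟩
    refine ⟨hx, fun n hn => ?_⟩
    rw [mem_nhdsWithin] at hn
    obtain ⟨u, hu, hxu, hun⟩ := hn
    calc (0 : ENNReal) < volume (E ∩ u) := h u (hu.mem_nhds hxu)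
      _ ≤ volume n := measure_mono (by rw [Set.inter_comm] at hun; exact hun)
  · rintro ⟨hx, h⟩
    exact ⟨hx, fun V hV => h (E ∩ V) (inter_mem_nhdsWithin E hV)⟩

/-- A smooth function vanishing on `posDensity E` has vanishing derivative there. -/
lemma fderiv_eq_zero_on_posDensity {d : ℕ} (hd : 1 ≤ d) {Ω E : Set (Fin d → ℝ)}
    (hΩ : IsOpen Ω) (hEΩ : E ⊆ Ω)
    (hE0meas : MeasurableSet (posDensity E)) (hb : volume (E \ posDensity E) = 0)
    {F : Type*} [NormedAddCommGroup F] [NormedSpace ℝ F]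
    {g : (Fin d → ℝ) → F} (hg : ContDiffOn ℝ (⊤ : ℕ∞) g Ω)
    (hg0 : ∀ x ∈ posDensity E, g x = 0) :
    ∀ x ∈ posDensity E, fderiv ℝ g x = 0 := by
  have hE0E : posDensity E ⊆ E := fun x hx => hx.1
  have hE0Ω : posDensity E ⊆ Ω := fun x hx => hEΩ (hE0E hx)
  intro x hx
  have hdiffAt : ∀ y ∈ Ω, DifferentiableAt ℝ g y := fun y hy =>
    ((hg.differentiableOn (by simp)) y hy).differentiableAt (hΩ.mem_nhds hy)
  -- almost every point of `posDensity E` is a density point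
  have hae := Besicovitch.ae_tendsto_measure_inter_div_of_measurableSet
    (volume : Measure (Fin d → ℝ)) hE0meas
  set P : (Fin d → ℝ) → Prop := fun y =>
    Filter.Tendsto
      (fun r => volume (posDensity E ∩ closedBall y r) / volume (closedBall y r))
      (nhdsWithin 0 (Set.Ioi 0)) (nhds 1) with hPdef
  set A : Set (Fin d → ℝ) := {y ∈ posDensity E | P y} with hAdef
  have hA0 : ∀ y ∈ A, fderiv ℝ g y = 0 := by
    intro y hy
    exact fderiv_eq_zero_of_density_one hd hy.1 (hdiffAt y (hE0Ω hy.1)) hg0 hy.2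
  have hEA : volume (posDensity E \ A) = 0 := by
    rw [ae_iff] at hae
    refine measure_mono_null (fun y hy => ?_) hae
    simp only [mem_setOf_eq]
    intro hten
    have h1 : (posDensity E).indicator (1 : (Fin d → ℝ) → ENNReal) y = 1 :=
      Set.indicator_of_mem hy.1 1
    rw [h1] at hten
    exact hy.2 ⟨hy.1, hten⟩
  -- `x` is in the closure of `A`
  have hxA : x ∈ closure A := by
    rw [mem_closure_iff_nhds]
    intro V hV
    by_contra hne
    rw [Set.not_nonempty_iff_eq_empty] at hne
    have hsub : E ∩ V ⊆ (E \ posDensity E) ∪ (posDensity E \ A) := by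
      intro z hz
      by_cases hz1 : z ∈ posDensity E
      · by_cases hz2 : z ∈ A
        · exfalso
          have : z ∈ V ∩ A := ⟨hz.2, hz2⟩
          rw [hne] at this
          exact this
        · exact Or.inr ⟨hz1, hz2⟩
      · exact Or.inl ⟨hz.1, hz1⟩
    have hzero : volume (E ∩ V) = 0 :=
      measure_mono_null hsub (measure_union_null hb hEA)
    have := hx.2 V hV
    rw [hzero] at this
    exact lt_irrefl _ this
  -- conclude by continuity of the derivative
  have hcont : ContinuousOn (fderiv ℝ g) Ω :=
    hg.continuousOn_fderiv_of_isOpen hΩ (by exact_mod_cast le_top)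
  have hcontAt : ContinuousAt (fderiv ℝ g) x :=
    (hcont x (hE0Ω hx)).continuousAt (hΩ.mem_nhds (hE0Ω hx))
  have hmem : fderiv ℝ g x ∈ closure (fderiv ℝ g '' A) :=
    hcontAt.continuousWithinAt.mem_closure_image hxA
  have himg : fderiv ℝ g '' A ⊆ {0} := by
    rintro - ⟨y, hy, rfl⟩
    exact hA0 y hy
  have : fderiv ℝ g x ∈ ({0} : Set ((Fin d → ℝ) →L[ℝ] F)) := by
    have := closure_mono himg hmem
    rwa [closure_singleton] at this
  exact this

/-- **Lemma 3.4.**  Let `Ω ⊆ ℝ^d` be open, `E ⊆ Ω` measurable of positive Lebesgue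
measure and let `E⁰ = posDensity E` be its set of points of positive Lebesgue density.
Then (a) every smooth function on `Ω` vanishing on `E⁰` is flat at `E⁰`
(all its derivatives vanish there), and (b) `E ∖ E⁰` is Lebesgue negligible. -/
theorem smooth_vanishing_on_density_points_is_flat
    {d : ℕ} (hd : 1 ≤ d) (Ω : Set (Fin d → ℝ)) (hΩ : IsOpen Ω)
    (E : Set (Fin d → ℝ)) (hEΩ : E ⊆ Ω) (hE : MeasurableSet E)
    (hpos : 0 < volume E) :
    (∀ f : (Fin d → ℝ) → ℝ, ContDiffOn ℝ (⊤ : ℕ∞) f Ω →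
        (∀ x ∈ posDensity E, f x = 0) →
        ∀ (m : ℕ), ∀ x ∈ posDensity E, iteratedFDeriv ℝ m f x = 0) ∧
    volume (E \ posDensity E) = 0 := by
  -- part (b)
  have hb : volume (E \ posDensity E) = 0 := by
    rw [posDensity_eq_everywherePosSubset]
    have h := Measure.everywherePosSubset_ae_eq (μ := (volume : Measure (Fin d → ℝ))) hE
    exact (ae_eq_set.mp h).2
  have hE0meas : MeasurableSet (posDensity E) := by
    rw [posDensity_eq_everywherePosSubset]
    exact hE.everywherePosSubset
  refine ⟨?_, hb⟩
  intro f hf hf0 m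
  induction m with
  | zero =>
    intro x hx
    ext y
    simp [hf0 x hx]
  | succ n ih =>
    have hsm : ContDiffOn ℝ (⊤ : ℕ∞) (iteratedFDeriv ℝ n f) Ω := by
      have h1 : ContDiffOn ℝ (⊤ : ℕ∞) (iteratedFDerivWithin ℝ n f Ω) Ω := fun y hy =>
        (hf y hy).iteratedFDerivWithin_right hΩ.uniqueDiffOn (by exact_mod_cast le_top) hy
      exact h1.congr fun y hy => (iteratedFDerivWithin_of_isOpen n hΩ hy).symm
    intro x hx
    have hfd : fderiv ℝ (iteratedFDeriv ℝ n f) x = 0 :=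
      fderiv_eq_zero_on_posDensity hd hΩ hEΩ hE0meas hb hsm ih x hx
    rw [iteratedFDeriv_succ_eq_comp_left, Function.comp_apply, hfd]
    exact LinearIsometryEquiv.map_zero _
end
end

section
/- Lemma 7.14 (modified small divisors). Let n ≥ 2 be an integer, τ > n−1, 0 < κ < 1, and let k ∈ ℤ^{n−1} with k ≠ 0, where |k| := Σ_j |k_j|. Let φ ∈ C^∞(ℝ) satisfy 0 ≤ φ ≤ 1, φ(x) = 1 for |x| ≤ π/5 and φ(x) = 0 for |x| ≥ π/4, and set φ_k(x) := Σ_{j∈ℤ} φ((x − 2πj)|k|^τ κ^{−1}) (for each x at most one summand is nonzero, since |k|^τ κ^{−1} > 1). Define z_k : ℝ^{n−1} → ℂ by z_k(ω) := 1 − e^{i⟨ω,k⟩} + (κ/3)(1+|k|)^{−τ} φ_k(⟨ω,k⟩). Then: (a) |z_k(ω)| ≥ (κ/3)(1+|k|)^{−τ} for every ω ∈ ℝ^{n−1}; (b) if ω ∈ ℝ^{n−1} satisfies dist(⟨ω,k⟩, 2πℤ) ≥ κ|k|^{−τ} (in particular if ω belongs to the Diophantine set D(κ,τ)), then z_k(ω)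 = 1 − e^{i⟨ω,k⟩}. -/
open Real

noncomputable section

/-- abs of complex number doesn't decrease when adding a nonneg real to one
with nonneg real part. -/
lemma abs_le_abs_add_real (w : ℂ) (r : ℝ) (hr : 0 ≤ r) (hw : 0 ≤ w.re) :
    ‖w‖ ≤ ‖w + (r : ℂ)‖ := by
  have h1 : ‖w‖ ^ 2 ≤ ‖w + (r : ℂ)‖ ^ 2 := by
    rw [Complex.sq_norm, Complex.sq_norm, Complex.normSq_apply, Complex.normSq_apply]
    simp only [Complex.add_re, Complex.add_im, Complex.ofReal_re, Complex.ofReal_im, add_zero]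
    nlinarith
  have h2 : 0 ≤ ‖w + (r : ℂ)‖ := norm_nonneg _
  nlinarith [norm_nonneg w]

/-- `|1 - e^{ix}| = 2|sin(x/2)|`. -/
lemma abs_one_sub_exp (x : ℝ) :
    ‖1 - Complex.exp (Complex.I * (x : ℂ))‖ = 2 * |Real.sin (x / 2)| := by
  have hsq : ‖1 - Complex.exp (Complex.I * (x : ℂ))‖ ^ 2
      = (2 * |Real.sin (x / 2)|) ^ 2 := by
    rw [Complex.sq_norm, Complex.normSq_apply]
    have hre : (1 - Complex.exp (Complex.I * (x : ℂ))).re = 1 - Real.cos x := by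
      rw [mul_comm]
      simp [Complex.exp_ofReal_mul_I_re]
    have him : (1 - Complex.exp (Complex.I * (x : ℂ))).im = -Real.sin x := by
      rw [mul_comm]
      simp [Complex.exp_ofReal_mul_I_im]
    rw [hre, him]
    have hhalf : Real.sin (x / 2) ^ 2 = (1 - Real.cos x) / 2 := by
      have := Real.sin_sq_eq_half_sub (x / 2)
      rw [show 2 * (x / 2) = x by ring] at this
      linarith
    have hpyth := Real.sin_sq_add_cos_sq x
    have : (2 * |Real.sin (x / 2)|) ^ 2 = 4 * Real.sin (x / 2) ^ 2 := by
      rw [mul_pow, sq_abs]; ring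
    rw [this, hhalf]
    nlinarith
  have h1 : 0 ≤ ‖1 - Complex.exp (Complex.I * (x : ℂ))‖ := norm_nonneg _
  have h2 : 0 ≤ 2 * |Real.sin (x / 2)| := by positivity
  nlinarith

set_option maxHeartbeats 1000000 in
/-- **Lemma 7.14 (modified small divisors).**  For `k ∈ ℤ^{n-1} ∖ {0}` let
`z_k(ω) = 1 - e^{i⟨ω,k⟩} + (κ/3)(1+|k|)^{-τ} φ_k(⟨ω,k⟩)`, where `φ_k` is the
`2π`-periodization of the rescaled cut-off `φ`.  Then `|z_k(ω)| ≥ (κ/3)(1+|k|)^{-τ}`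
everywhere, and `z_k(ω) = 1 - e^{i⟨ω,k⟩}` whenever `dist(⟨ω,k⟩, 2πℤ) ≥ κ|k|^{-τ}`. -/
theorem modified_small_divisors
    (n : ℕ) (hn : 2 ≤ n) (τ κ : ℝ) (hτ : (n : ℝ) - 1 < τ) (hκ0 : 0 < κ) (hκ1 : κ < 1)
    (k : Fin (n - 1) → ℤ) (hk : k ≠ 0)
    (φ : ℝ → ℝ) (hφsmooth : ContDiff ℝ (⊤ : ℕ∞) φ)
    (hφrange : ∀ x, 0 ≤ φ x ∧ φ x ≤ 1)
    (hφone : ∀ x, |x| ≤ π / 5 → φ x = 1)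
    (hφzero : ∀ x, π / 4 ≤ |x| → φ x = 0)
    (nk : ℝ) (hnk : nk = ∑ j, |(k j : ℝ)|)
    (φk : ℝ → ℝ) (hφk : ∀ x, φk x = ∑' j : ℤ, φ ((x - 2 * π * (j : ℝ)) * nk ^ τ / κ))
    (z : (Fin (n - 1) → ℝ) → ℂ)
    (hz : ∀ ω, z ω = 1 - Complex.exp (Complex.I * ((∑ j, ω j * (k j : ℝ) : ℝ) : ℂ))
        + (((κ / 3) * (1 + nk) ^ (-τ) * φk (∑ j, ω j * (k j : ℝ)) : ℝ) : ℂ)) :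
    (∀ ω : Fin (n - 1) → ℝ, κ / 3 * (1 + nk) ^ (-τ) ≤ ‖z ω‖) ∧
    (∀ ω : Fin (n - 1) → ℝ,
      (∀ m : ℤ, κ / nk ^ τ ≤ |(∑ j, ω j * (k j : ℝ)) - 2 * π * (m : ℝ)|) →
      z ω = 1 - Complex.exp (Complex.I * ((∑ j, ω j * (k j : ℝ) : ℝ) : ℂ))) := by
  have hπ : (0:ℝ) < π := Real.pi_pos
  have hπ3 : (3:ℝ) < π := Real.pi_gt_three
  have hπ4 : π ≤ 4 := Real.pi_le_four
  have hn1 : (1:ℝ) ≤ (n : ℝ) - 1 := by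
    have : (2:ℝ) ≤ (n : ℝ) := by exact_mod_cast hn
    linarith
  have hτ0 : 0 < τ := by linarith
  have hnk1 : (1:ℝ) ≤ nk := by
    obtain ⟨j, hj⟩ : ∃ j, k j ≠ 0 := Function.ne_iff.mp hk
    rw [hnk]
    have h1 : (1:ℝ) ≤ |(k j : ℝ)| := by
      have h := Int.one_le_abs hj
      calc (1:ℝ) = ((1:ℤ):ℝ) := by norm_num
        _ ≤ ((|k j|:ℤ):ℝ) := by exact_mod_cast h
        _ = |(k j : ℝ)| := by push_cast; ring
    exact h1.trans (Finset.single_le_sum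
      (f := fun i => |(k i : ℝ)|) (fun i _ => abs_nonneg _) (Finset.mem_univ j))
  have hnk0 : (0:ℝ) < nk := lt_of_lt_of_le one_pos hnk1
  have hP : (0:ℝ) < nk ^ τ := Real.rpow_pos_of_pos hnk0 τ
  have hP1 : (1:ℝ) ≤ nk ^ τ := Real.one_le_rpow hnk1 hτ0.le
  have hs1 : (1:ℝ) ≤ nk ^ τ / κ := by
    rw [le_div_iff₀ hκ0]; nlinarith
  -- vanishing of far terms
  have hterm0 : ∀ y : ℝ, ∀ j : ℤ, κ / nk ^ τ ≤ |y - 2 * π * (j:ℝ)| →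
      φ ((y - 2 * π * (j:ℝ)) * nk ^ τ / κ) = 0 := by
    intro y j hy
    apply hφzero
    rw [abs_div, abs_mul, abs_of_pos hP, abs_of_pos hκ0]
    have h1 : (1:ℝ) ≤ |y - 2 * π * (j:ℝ)| * nk ^ τ / κ := by
      rw [le_div_iff₀ hκ0]
      calc 1 * κ = (κ / nk ^ τ) * nk ^ τ := by field_simp
        _ ≤ |y - 2 * π * (j:ℝ)| * nk ^ τ := by
            exact mul_le_mul_of_nonneg_right hy hP.le
    linarith
  have hφknonneg : ∀ x : ℝ, 0 ≤ φk x := by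
    intro x
    rw [hφk]
    exact tsum_nonneg fun j => (hφrange _).1
  -- exponent monotonicity
  have hmono : (1 + nk) ^ (-τ) ≤ (nk ^ τ)⁻¹ := by
    have h1 : nk ^ τ ≤ (1 + nk) ^ τ :=
      Real.rpow_le_rpow hnk0.le (by linarith) hτ0.le
    rw [Real.rpow_neg (by linarith : (0:ℝ) ≤ 1 + nk)]
    exact inv_anti₀ hP h1
  have hcpos : (0:ℝ) < κ / 3 * (1 + nk) ^ (-τ) := by positivity
  constructor
  · -- part (a)
    intro ω
    set x := ∑ j, ω j * (k j : ℝ) with hx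
    set m : ℤ := round (x / (2 * π)) with hm
    have h2π : (0:ℝ) < 2 * π := by linarith
    have hd : |x - 2 * π * (m:ℝ)| ≤ π := by
      have h := abs_sub_round (x / (2 * π))
      have heq : x / (2 * π) - (m:ℝ) = (x - 2 * π * (m:ℝ)) / (2 * π) := by
        field_simp
      rw [heq, abs_div, abs_of_pos h2π, div_le_iff₀ h2π] at h
      linarith
    -- φk x reduces to a single term
    have hφkx : φk x = φ ((x - 2 * π * (m:ℝ)) * nk ^ τ / κ) := by
      rw [hφk]
      apply tsum_eq_single m
      intro j hj
      apply hterm0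
      have hmj : (1:ℝ) ≤ |(m:ℝ) - (j:ℝ)| := by
        have h := Int.one_le_abs (sub_ne_zero.mpr (Ne.symm hj))
        calc (1:ℝ) = ((1:ℤ):ℝ) := by norm_num
          _ ≤ ((|m - j|:ℤ):ℝ) := by exact_mod_cast h
          _ = |(m:ℝ) - (j:ℝ)| := by push_cast; ring
      have hsplit : x - 2 * π * (j:ℝ) = (x - 2 * π * (m:ℝ)) + 2 * π * ((m:ℝ) - (j:ℝ)) := by
        ring
      have habs : 2 * π * |(m:ℝ) - (j:ℝ)| ≤ |x - 2 * π * (j:ℝ)| + |x - 2 * π * (m:ℝ)| := by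
        calc 2 * π * |(m:ℝ) - (j:ℝ)| = |2 * π * ((m:ℝ) - (j:ℝ))| := by
              rw [abs_mul, abs_of_pos h2π]
          _ = |(x - 2 * π * (j:ℝ)) - (x - 2 * π * (m:ℝ))| := by rw [hsplit]; ring_nf
          _ ≤ |x - 2 * π * (j:ℝ)| + |x - 2 * π * (m:ℝ)| := abs_sub _ _
      have hπle : π ≤ |x - 2 * π * (j:ℝ)| := by nlinarith
      have : κ / nk ^ τ ≤ 1 := by
        rw [div_le_one hP]; nlinarith
      linarith
    -- rewrite z
    rw [hz ω, ← hx]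
    set c := κ / 3 * (1 + nk) ^ (-τ) with hc
    have hcz : κ / 3 * (1 + nk) ^ (-τ) * φk x = c * φk x := by rw [hc]
    have hre : (Complex.exp (Complex.I * (x : ℂ))).re = Real.cos x := by
      rw [mul_comm]; exact Complex.exp_ofReal_mul_I_re x
    rcases le_or_gt (|(x - 2 * π * (m:ℝ)) * nk ^ τ / κ|) (π / 5) with hcase | hcase
    · -- near resonance: φk x = 1, use real part
      have hφ1 : φk x = 1 := by rw [hφkx]; exact hφone _ hcase
      have hrez : (1 - Complex.exp (Complex.I * (x : ℂ))
          + ((κ / 3 * (1 + nk) ^ (-τ) * φk x : ℝ) : ℂ)).re = 1 - Real.cos x + c := by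
        simp [Complex.add_re, Complex.sub_re, hre, hφ1, hc]
      calc c ≤ 1 - Real.cos x + c := by nlinarith [Real.cos_le_one x]
        _ = _ := hrez.symm
        _ ≤ _ := Complex.re_le_norm _
    · -- far from resonance: use |1 - e^{ix}|
      have hrepos : 0 ≤ (1 - Complex.exp (Complex.I * (x : ℂ))).re := by
        simp only [Complex.sub_re, Complex.one_re, hre]
        nlinarith [Real.cos_le_one x]
      have hstep1 : ‖1 - Complex.exp (Complex.I * (x : ℂ))‖
          ≤ ‖1 - Complex.exp (Complex.I * (x : ℂ))
            + ((κ / 3 * (1 + nk) ^ (-τ) * φk x : ℝ) : ℂ)‖ :=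
        abs_le_abs_add_real _ _ (mul_nonneg hcpos.le (hφknonneg x)) hrepos
      -- lower bound on |1 - e^{ix}|
      set d := x - 2 * π * (m:ℝ) with hdd
      have hdlb : π / 5 * (κ / nk ^ τ) ≤ |d| := by
        rw [abs_div, abs_mul, abs_of_pos hP, abs_of_pos hκ0, lt_div_iff₀ hκ0] at hcase
        rw [show π / 5 * (κ / nk ^ τ) = π / 5 * κ / nk ^ τ by ring, div_le_iff₀ hP]
        linarith
      have hsin : |Real.sin (x / 2)| = Real.sin (|d| / 2) := by
        have hx2 : x / 2 = d / 2 + (m:ℤ) * π := by rw [hdd]; push_cast; ring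
        have h1 : |Real.sin (x / 2)| = |Real.sin (d / 2)| := by
          have hu : |((-1 : ℝ)) ^ m| = 1 := by
            rcases Int.even_or_odd m with he | he
            · rw [he.neg_one_zpow]; norm_num
            · rw [Odd.neg_one_zpow he]; norm_num
          rw [hx2, Real.sin_add_int_mul_pi, abs_mul, hu, one_mul]
        rw [h1]
        rcases le_or_gt 0 d with hd0 | hd0
        · rw [abs_of_nonneg hd0,
            abs_of_nonneg (Real.sin_nonneg_of_nonneg_of_le_pi (by linarith) (by
              rw [abs_of_nonneg hd0] at hd; linarith))]
        · have hdneg : |d| = -d := abs_of_neg hd0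
          rw [hdneg, show d / 2 = -(-d / 2) by ring, Real.sin_neg, abs_neg,
            abs_of_nonneg (Real.sin_nonneg_of_nonneg_of_le_pi (by linarith) (by
              rw [hdneg] at hd; linarith))]
      have hsinlb : 2 / π * (|d| / 2) ≤ Real.sin (|d| / 2) := by
        apply Real.mul_le_sin (by positivity)
        have := abs_nonneg d
        linarith
      have hfinal : c ≤ 2 * |Real.sin (x / 2)| := by
        rw [hsin]
        have h1 : c ≤ κ / 3 * (nk ^ τ)⁻¹ := by
          rw [hc]
          exact mul_le_mul_of_nonneg_left hmono (by positivity)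
        have h2 : 2 / π * |d| ≤ 2 * Real.sin (|d| / 2) := by
          have : 2 / π * |d| = 2 * (2 / π * (|d| / 2)) := by ring
          linarith
        have h3 : 2 / π * (π / 5 * (κ / nk ^ τ)) ≤ 2 / π * |d| :=
          mul_le_mul_of_nonneg_left hdlb (by positivity)
        have h4 : 2 / π * (π / 5 * (κ / nk ^ τ)) = 2 / 5 * (κ * (nk ^ τ)⁻¹) := by
          field_simp
        have h5 : κ / 3 * (nk ^ τ)⁻¹ ≤ 2 / 5 * (κ * (nk ^ τ)⁻¹) := by
          nlinarith [mul_pos hκ0 (inv_pos.mpr hP)]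
        linarith
      calc c ≤ 2 * |Real.sin (x / 2)| := hfinal
        _ = ‖1 - Complex.exp (Complex.I * (x : ℂ))‖ := (abs_one_sub_exp x).symm
        _ ≤ _ := hstep1
  · -- part (b)
    intro ω hω
    rw [hz ω]
    have h0 : φk (∑ j, ω j * (k j : ℝ)) = 0 := by
      rw [hφk]
      have hall : ∀ j : ℤ, φ (((∑ j, ω j * (k j : ℝ)) - 2 * π * (j:ℝ)) * nk ^ τ / κ) = 0 :=
        fun j => hterm0 _ j (hω j)
      calc (∑' j : ℤ, φ (((∑ j, ω j * (k j : ℝ)) - 2 * π * (j:ℝ)) * nk ^ τ / κ))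
          = ∑' _ : ℤ, (0:ℝ) := tsum_congr hall
        _ = 0 := tsum_zero
    rw [h0, mul_zero, Complex.ofReal_zero, add_zero]
end
end

section
/- Corollary B.6 (explicit twist data for elliptical billiard tables). Let ε > 0 and N > 0. Set q(y) := −4ε²π² sinh²(2πy) for y ∈ [−N,N], and let α₀ := 4π²ε², α₁ := −16π⁴ε², α₂ := (64π⁶/3)ε² (these are the Taylor coefficients at x₀ = 1/4 of f(x) = 4ε²π² sin²(2πx), i.e. f(x) = α₀ + α₁(x−x₀)² + α₂(x−x₀)⁴ + O((x−x₀)⁶)). Define A := −(√(−α₁)/π) ∫_{−N}^{N} (α₀ − q(y))^{−1/2} dy and B := (α₁/(4π²)) ( 2 ∫_{−N}^{N} (α₀ − q(y))^{−3/2} dy − (3α₂/α₁²) ∫_{−N}^{N} (α₀ − q(y))^{−1/2} dy ) (by Theorem B.5 these equal the first and second derivatives dK/dI(0) and d²K/dI²(0) at the elliptic fixed point of the Hamiltonian K generating the billiard ball map of the elliptical billiard table, written in action-angle coordinates). Then A = −(2/π) · arctan(sinh(2πN)) and −1 < A < 0, and B = −(1/(2π²ε)) · sinh(2πN)/cosh²(2πN)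 and B < 0. In particular the Poincaré map of the elliptic billiard ball map is nondegenerate (twisted) at the elliptic fixed point. -/
open Real Set intervalIntegral

noncomputable section

lemma ebt_int1 (ε N : ℝ) (hε : 0 < ε) :
    (∫ y in (-N)..N, ((2*π*ε*Real.cosh (2*π*y))^2 : ℝ) ^ (-(1 : ℝ)/2))
      = Real.arctan (Real.sinh (2*π*N)) / (2*π^2*ε) := by
  have hπ : (0:ℝ) < π := Real.pi_pos
  have hpos : ∀ y : ℝ, 0 < 2*π*ε*Real.cosh (2*π*y) := fun y => by
    have := Real.cosh_pos (x := 2*π*y); positivity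
  have hfeq : ∀ y : ℝ, (((2*π*ε*Real.cosh (2*π*y))^2 : ℝ)) ^ (-(1:ℝ)/2)
      = (2*π*ε*Real.cosh (2*π*y))⁻¹ := by
    intro y
    rw [show (-(1:ℝ)/2) = -(1/2 : ℝ) by ring, Real.rpow_neg (by positivity),
      ← Real.sqrt_eq_rpow, Real.sqrt_sq (hpos y).le]
  have hcont : Continuous fun y : ℝ => (2*π*ε*Real.cosh (2*π*y))⁻¹ := by
    apply Continuous.inv₀
    · continuity
    · exact fun y => (hpos y).ne'
  have hderiv : ∀ x ∈ Set.uIcc (-N) N,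
      HasDerivAt (fun y => Real.arctan (Real.sinh (2*π*y)) / (4*π^2*ε))
        ((2*π*ε*Real.cosh (2*π*x))⁻¹) x := by
    intro x _
    have h1 : HasDerivAt (fun y : ℝ => 2*π*y) (2*π) x := by
      simpa using (hasDerivAt_id x).const_mul (2*π)
    have hs := h1.sinh
    have ha := (Real.hasDerivAt_arctan (Real.sinh (2*π*x))).comp x hs
    have hd := ha.div_const (4*π^2*ε)
    refine hd.congr_deriv (Eq.symm ?_)
    have h2 : 1 + Real.sinh (2*π*x)^2 = Real.cosh (2*π*x)^2 := by
      rw [Real.cosh_sq]; ring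
    have hc := (Real.cosh_pos (x := 2*π*x)).ne'
    field_simp [Function.comp]
    rw [h2]; ring
  have key := intervalIntegral.integral_eq_sub_of_hasDerivAt hderiv
    (hcont.intervalIntegrable _ _)
  rw [intervalIntegral.integral_congr (g := fun y : ℝ => (2*π*ε*Real.cosh (2*π*y))⁻¹)
    (fun y _ => hfeq y), key]
  rw [show (2*π*(-N)) = -(2*π*N) by ring, Real.sinh_neg, Real.arctan_neg]
  field_simp
  ring

lemma ebt_int3 (ε N : ℝ) (hε : 0 < ε) :
    (∫ y in (-N)..N, ((2*π*ε*Real.cosh (2*π*y))^2 : ℝ) ^ (-(3 : ℝ)/2))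
      = (Real.sinh (2*π*N) / Real.cosh (2*π*N)^2 + Real.arctan (Real.sinh (2*π*N)))
        / (16*π^4*ε^3) := by
  have hπ : (0:ℝ) < π := Real.pi_pos
  have hpos : ∀ y : ℝ, 0 < 2*π*ε*Real.cosh (2*π*y) := fun y => by
    have := Real.cosh_pos (x := 2*π*y); positivity
  have hfeq : ∀ y : ℝ, (((2*π*ε*Real.cosh (2*π*y))^2 : ℝ)) ^ (-(3:ℝ)/2)
      = ((2*π*ε*Real.cosh (2*π*y))^3)⁻¹ := by
    intro y
    have h0 := hpos y
    rw [← Real.rpow_natCast (2*π*ε*Real.cosh (2*π*y)) 2, ← Real.rpow_mul h0.le,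
      show ((2:ℕ):ℝ) * (-(3:ℝ)/2) = -((3:ℕ):ℝ) by norm_num,
      Real.rpow_neg h0.le, Real.rpow_natCast]
  have hcont : Continuous fun y : ℝ => ((2*π*ε*Real.cosh (2*π*y))^3)⁻¹ := by
    apply Continuous.inv₀
    · continuity
    · exact fun y => pow_ne_zero _ (hpos y).ne'
  set G : ℝ → ℝ := fun y =>
    (Real.sinh (2*π*y) / Real.cosh (2*π*y)^2 + Real.arctan (Real.sinh (2*π*y)))
      / (32*π^4*ε^3) with hG
  have hderiv : ∀ x ∈ Set.uIcc (-N) N,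
      HasDerivAt G (((2*π*ε*Real.cosh (2*π*x))^3)⁻¹) x := by
    intro x _
    have h1 : HasDerivAt (fun y : ℝ => 2*π*y) (2*π) x := by
      simpa using (hasDerivAt_id x).const_mul (2*π)
    have hs := h1.sinh
    have hc := h1.cosh
    have hc2 := hc.pow 2
    have hcne : Real.cosh (2*π*x) ≠ 0 := (Real.cosh_pos (x := 2*π*x)).ne'
    have hc2ne : Real.cosh (2*π*x)^2 ≠ 0 := pow_ne_zero _ hcne
    have hdiv := hs.div hc2 hc2ne
    have ha := (Real.hasDerivAt_arctan (Real.sinh (2*π*x))).comp x hs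
    have hd := (hdiv.add ha).div_const (32*π^4*ε^3)
    refine hd.congr_deriv (Eq.symm ?_)
    have h2 : 1 + Real.sinh (2*π*x)^2 = Real.cosh (2*π*x)^2 := by
      rw [Real.cosh_sq]; ring
    simp only [Pi.pow_apply]
    field_simp
    linear_combination (16*Real.cosh (2*π*x)*(2*(1 + Real.sinh (2*π*x)^2)
      + Real.cosh (2*π*x)^2)) * h2
  have key := intervalIntegral.integral_eq_sub_of_hasDerivAt hderiv
    (hcont.intervalIntegrable _ _)
  rw [intervalIntegral.integral_congr
    (g := fun y : ℝ => ((2*π*ε*Real.cosh (2*π*y))^3)⁻¹) (fun y _ => hfeq y), key, hG]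
  simp only [show (2*π*(-N)) = -(2*π*N) by ring, Real.sinh_neg, Real.arctan_neg,
    Real.cosh_neg]
  have hcne : Real.cosh (2*π*N) ≠ 0 := (Real.cosh_pos (x := 2*π*N)).ne'
  field_simp
  ring

/-- **Corollary B.6 (explicit twist data for elliptical billiard tables).**
With `q(y) = -4ε²π² sinh²(2πy)` and the Taylor coefficients `α₀, α₁, α₂` of
`f(x) = 4ε²π² sin²(2πx)` at `x₀ = 1/4`, the quantities
`A = dK/dI(0)` and `B = d²K/dI²(0)` of Theorem B.5 satisfy
`A = -(2/π) arctan(sinh 2πN) ∈ (-1,0)` and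
`B = -(1/(2π²ε)) sinh(2πN)/cosh²(2πN) < 0`. -/
theorem elliptical_billiard_twist
    (ε N : ℝ) (hε : 0 < ε) (hN : 0 < N)
    (α₀ α₁ α₂ : ℝ)
    (h0 : α₀ = 4 * π ^ 2 * ε ^ 2)
    (h1 : α₁ = -(16 * π ^ 4 * ε ^ 2))
    (h2 : α₂ = 64 * π ^ 6 / 3 * ε ^ 2)
    (q : ℝ → ℝ) (hq : ∀ y, q y = -(4 * ε ^ 2 * π ^ 2) * Real.sinh (2 * π * y) ^ 2)
    (A B : ℝ)
    (hA : A = -(Real.sqrt (-α₁) / π) * ∫ y in (-N)..N, (α₀ - q y) ^ (-(1 : ℝ) / 2))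
    (hB : B = α₁ / (4 * π ^ 2) *
        (2 * (∫ y in (-N)..N, (α₀ - q y) ^ (-(3 : ℝ) / 2))
          - 3 * α₂ / α₁ ^ 2 * ∫ y in (-N)..N, (α₀ - q y) ^ (-(1 : ℝ) / 2))) :
    A = -(2 / π) * Real.arctan (Real.sinh (2 * π * N)) ∧ -1 < A ∧ A < 0 ∧
    B = -(1 / (2 * π ^ 2 * ε)) * (Real.sinh (2 * π * N) / Real.cosh (2 * π * N) ^ 2) ∧
    B < 0 := by
  have hπ : (0:ℝ) < π := Real.pi_pos
  have hbase : ∀ y : ℝ, α₀ - q y = (2*π*ε*Real.cosh (2*π*y))^2 := by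
    intro y; rw [h0, hq]
    linear_combination (-(4*π^2*ε^2)) * Real.cosh_sq (2*π*y)
  have hI1 : (∫ y in (-N)..N, (α₀ - q y) ^ (-(1 : ℝ) / 2))
      = Real.arctan (Real.sinh (2*π*N)) / (2*π^2*ε) := by
    rw [intervalIntegral.integral_congr
      (g := fun y : ℝ => ((2*π*ε*Real.cosh (2*π*y))^2 : ℝ) ^ (-(1 : ℝ)/2))
      (fun y _ => by rw [hbase y])]
    exact ebt_int1 ε N hε
  have hI3 : (∫ y in (-N)..N, (α₀ - q y) ^ (-(3 : ℝ) / 2))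
      = (Real.sinh (2*π*N) / Real.cosh (2*π*N)^2 + Real.arctan (Real.sinh (2*π*N)))
        / (16*π^4*ε^3) := by
    rw [intervalIntegral.integral_congr
      (g := fun y : ℝ => ((2*π*ε*Real.cosh (2*π*y))^2 : ℝ) ^ (-(3 : ℝ)/2))
      (fun y _ => by rw [hbase y])]
    exact ebt_int3 ε N hε
  have hsqrt : Real.sqrt (-α₁) = 4*π^2*ε := by
    rw [h1, show -(-(16 * π ^ 4 * ε ^ 2)) = (4*π^2*ε)^2 by ring,
      Real.sqrt_sq (by positivity)]
  have hS : 0 < Real.sinh (2*π*N) := Real.sinh_pos_iff.mpr (by positivity)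
  have harc_pos : 0 < Real.arctan (Real.sinh (2*π*N)) := by simpa using Real.arctan_strictMono hS
  have harc_lt : Real.arctan (Real.sinh (2*π*N)) < π/2 := Real.arctan_lt_pi_div_two _
  have hAval : A = -(2 / π) * Real.arctan (Real.sinh (2 * π * N)) := by
    rw [hA, hI1, hsqrt]
    field_simp
    ring
  have hBval : B = -(1 / (2 * π ^ 2 * ε)) *
      (Real.sinh (2 * π * N) / Real.cosh (2 * π * N) ^ 2) := by
    have hcne : Real.cosh (2*π*N) ≠ 0 := (Real.cosh_pos (x := 2*π*N)).ne'
    rw [hB, hI1, hI3, h1, h2]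
    field_simp
    ring
  refine ⟨hAval, ?_, ?_, hBval, ?_⟩
  · rw [hAval]
    have h := mul_lt_mul_of_pos_left harc_lt (show (0:ℝ) < 2/π by positivity)
    have he : (2/π) * (π/2) = 1 := by field_simp
    nlinarith
  · rw [hAval]
    have := mul_pos (show (0:ℝ) < 2/π by positivity) harc_pos
    linarith
  · rw [hBval]
    have hC : 0 < Real.cosh (2*π*N) := Real.cosh_pos (x := 2*π*N)
    have : 0 < (1 / (2 * π ^ 2 * ε)) *
        (Real.sinh (2 * π * N) / Real.cosh (2 * π * N) ^ 2) := by positivity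
    linarith
end
end

section
/- Lemma A.16 (factorization of a generated near-integrable map). Let d ≥ 1, let D ⊆ ℝ^d be open, set 𝔸 := 𝕋^d × D, let K ∈ C^∞(D, ℝ) and let G ∈ C^∞(𝔸, ℝ) with supp G ⊂ 𝕋^d × F for some compact F ⊂ D. Let 0 < κ ≤ 1 and 0 < ε₀ < 1, and assume 2d · ‖σ_κ^{−1} sgrad G‖_{1,𝔸;κ} ≤ ε₀ (where sgrad G := (∇_r G, −∇_θ G), σ_κ(θ,r) := (θ,κr), σ_κ^{−1} sgrad G := (∇_r G, −κ^{−1}∇_θ G) and ‖u‖_{ℓ,𝔸;κ} := ‖u ∘ σ_κ‖_{C^ℓ(σ_κ^{−1}(𝔸))}) and ‖∇_θ G‖_{C⁰} < dist(F, ℝ^d ∖ D). Then: (a) the function (θ,r) ↦ ⟨θ,r⟩ − G(θ,r) is a generating function of a smooth map W : 𝔸 → 𝔸, i.e. the map θ ↦ θ − ∇_r G(θ,r) is a diffeomorphism of 𝕋^d for each r ∈ D and there is a unique smooth W with W(θ − ∇_r G(θ,r), r) = (θ, r − ∇_θ G(θ,r)) for all (θ,r) ∈ 𝔸; moreover W −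 id vanishes outside 𝕋^d × F; (b) the function (θ,r) ↦ ⟨θ,r⟩ − K(r) − G(θ,r) is a generating function of a smooth map P : 𝔸 → 𝔸, i.e. P(θ − ∇K(r) − ∇_r G(θ,r), r) = (θ, r − ∇_θ G(θ,r)) for all (θ,r) ∈ 𝔸; (c) P = W ∘ Q on 𝔸, where Q(θ,r) := (θ + ∇K(r), r). -/
open Real Set Metric
open scoped ENNReal

noncomputable section

/-- `ℝ≥0∞`-valued Hölder norm of order `ℓ ≥ 0` of `f` on `s`. -/
def eHolder {E F : Type*} [NormedAddCommGroup E] [NormedSpace ℝ E]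
    [NormedAddCommGroup F] [NormedSpace ℝ F] (ℓ : ℝ) (s : Set E) (f : E → F) : ℝ≥0∞ :=
  (⨆ (m : ℕ) (_ : (m : ℝ) ≤ ℓ) (x ∈ s), (‖iteratedFDerivWithin ℝ m f s x‖₊ : ℝ≥0∞)) ⊔
  (⨆ (_ : (⌊ℓ⌋₊ : ℝ) < ℓ) (x ∈ s) (y ∈ s) (_ : x ≠ y),
      (‖iteratedFDerivWithin ℝ ⌊ℓ⌋₊ f s x - iteratedFDerivWithin ℝ ⌊ℓ⌋₊ f s y‖₊ : ℝ≥0∞) /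
        ENNReal.ofReal (‖x - y‖ ^ (ℓ - (⌊ℓ⌋₊ : ℝ))))

/-- Gradient in the first (angle) variables. -/
def gradθ {d : ℕ} (G : (Fin d → ℝ) × (Fin d → ℝ) → ℝ)
    (p : (Fin d → ℝ) × (Fin d → ℝ)) : Fin d → ℝ :=
  fun j => fderiv ℝ G p ((Pi.single j 1 : Fin d → ℝ), 0)

/-- Gradient in the second (action) variables. -/
def gradr {d : ℕ} (G : (Fin d → ℝ) × (Fin d → ℝ) → ℝ)
    (p : (Fin d → ℝ) × (Fin d → ℝ)) : Fin d → ℝ :=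
  fun j => fderiv ℝ G p (0, (Pi.single j 1 : Fin d → ℝ))

/-- Gradient of a function of the action variables only. -/
def gradv {d : ℕ} (K : (Fin d → ℝ) → ℝ) (x : Fin d → ℝ) : Fin d → ℝ :=
  fun j => fderiv ℝ K x (Pi.single j 1)

/-- The rescaled symplectic gradient `(σ_κ⁻¹ sgrad G) ∘ σ_κ`. -/
def sgradScaled {d : ℕ} (κ : ℝ) (G : (Fin d → ℝ) × (Fin d → ℝ) → ℝ) :
    (Fin d → ℝ) × (Fin d → ℝ) → (Fin d → ℝ) × (Fin d → ℝ) :=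
  fun p => (gradr G (p.1, κ • p.2), -(κ⁻¹ • gradθ G (p.1, κ • p.2)))

section Aux

variable {d : ℕ} {G : (Fin d → ℝ) × (Fin d → ℝ) → ℝ}

lemma contDiff_gradr (hG : ContDiff ℝ (⊤ : ℕ∞) G) : ContDiff ℝ (⊤ : ℕ∞) (gradr G) :=
  contDiff_pi.2 fun _ => (hG.fderiv_right (by simp)).clm_apply contDiff_const

lemma contDiff_gradθ (hG : ContDiff ℝ (⊤ : ℕ∞) G) : ContDiff ℝ (⊤ : ℕ∞) (gradθ G) :=
  contDiff_pi.2 fun _ => (hG.fderiv_right (by simp)).clm_apply contDiff_const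

/-- derivative of `sgradScaled` in a horizontal direction computes the horizontal
derivative of `gradr G`. -/
lemma fderiv_sgradScaled_fst {κ : ℝ} (hκ : κ ≠ 0) (hG : ContDiff ℝ (⊤ : ℕ∞) G)
    (θ r : Fin d → ℝ) (v : Fin d → ℝ) :
    fderiv ℝ (gradr G) (θ, r) (v, 0)
      = (fderiv ℝ (sgradScaled κ G) (θ, κ⁻¹ • r) (v, 0)).1 := by
  have h1top : ((⊤:ℕ∞) : WithTop ℕ∞) ≠ 0 := by simp
  set σL : ((Fin d → ℝ) × (Fin d → ℝ)) →L[ℝ] ((Fin d → ℝ) × (Fin d → ℝ)) :=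
    (ContinuousLinearMap.fst ℝ _ _).prod (κ • ContinuousLinearMap.snd ℝ _ _) with hσL
  have hσapp : ∀ p : (Fin d → ℝ) × (Fin d → ℝ), σL p = (p.1, κ • p.2) := fun p => rfl
  set x : (Fin d → ℝ) × (Fin d → ℝ) := (θ, κ⁻¹ • r) with hx
  have hσx : σL x = (θ, r) := by
    rw [hσapp]; simp [hx, smul_smul, mul_inv_cancel₀ hκ]
  have hA : HasFDerivAt (fun q : (Fin d → ℝ) × (Fin d → ℝ) => (gradr G q, -(κ⁻¹ • gradθ G q)))
      ((fderiv ℝ (gradr G) (σL x)).prod (-(κ⁻¹ • fderiv ℝ (gradθ G) (σL x)))) (σL x) := by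
    refine HasFDerivAt.prodMk ?_ ?_
    · exact ((contDiff_gradr hG).differentiable h1top _).hasFDerivAt
    · exact (((contDiff_gradθ hG).differentiable h1top _).hasFDerivAt.const_smul κ⁻¹).neg
  have hg : HasFDerivAt (sgradScaled κ G)
      (((fderiv ℝ (gradr G) (σL x)).prod (-(κ⁻¹ • fderiv ℝ (gradθ G) (σL x)))).comp σL) x := by
    have := hA.comp x (σL.hasFDerivAt (x := x))
    exact this
  have hfd := hg.fderiv
  rw [hfd]
  simp only [ContinuousLinearMap.coe_comp', Function.comp_apply,
    ContinuousLinearMap.prod_apply]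
  rw [hσx]
  have : σL (v, 0) = (v, 0) := by rw [hσapp]; simp
  rw [this]

lemma norm_le_of_eHolder {E F' : Type*} [NormedAddCommGroup E] [NormedSpace ℝ E]
    [NormedAddCommGroup F'] [NormedSpace ℝ F'] {s : Set E} {f : E → F'} {C : ℝ}
    (hC : 0 ≤ C) (hle : eHolder 1 s f ≤ ENNReal.ofReal C) (m : ℕ) (hm : (m:ℝ) ≤ 1)
    {x : E} (hx : x ∈ s) : ‖iteratedFDerivWithin ℝ m f s x‖ ≤ C := by
  have h1 : (‖iteratedFDerivWithin ℝ m f s x‖₊ : ℝ≥0∞) ≤ eHolder 1 s f :=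
    le_sup_of_le_left (le_iSup₂_of_le m hm (le_iSup₂_of_le x hx le_rfl))
  have h2 := h1.trans hle
  rw [← enorm_eq_nnnorm, ← ofReal_norm] at h2
  exact (ENNReal.ofReal_le_ofReal_iff hC).1 h2

lemma norm_fderiv_le_of_eHolder {E F' : Type*} [NormedAddCommGroup E] [NormedSpace ℝ E]
    [NormedAddCommGroup F'] [NormedSpace ℝ F'] {s : Set E} {f : E → F'} {C : ℝ}
    (hs : IsOpen s) (hC : 0 ≤ C) (hle : eHolder 1 s f ≤ ENNReal.ofReal C)
    {x : E} (hx : x ∈ s) : ‖fderiv ℝ f x‖ ≤ C := by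
  have h := norm_le_of_eHolder hC hle 1 (by norm_num) hx
  rw [iteratedFDerivWithin_of_isOpen 1 hs hx] at h
  rw [← norm_iteratedFDeriv_zero (𝕜 := ℝ) (f := fderiv ℝ f) (x := x), norm_iteratedFDeriv_fderiv]
  exact h

end Aux

/-- **Lemma A.16 (factorization of a generated near-integrable map).**
If `G` is supported in `𝕋^d × F`, `F ⊂ D` compact, with
`2d‖σ_κ⁻¹ sgrad G‖_{1,𝔸;κ} ≤ ε₀ < 1` and `‖∇_θ G‖_{C⁰} < dist(F, ℝ^d ∖ D)`, then
`⟨θ,r⟩ - G` generates a map `W` of `𝕋^d × D` equal to the identity outside `𝕋^d × F`,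
`⟨θ,r⟩ - K(r) - G` generates a map `P` of `𝕋^d × D`, and `P = W ∘ Q` with
`Q(θ,r) = (θ + ∇K(r), r)`. -/
theorem factorization_of_generated_map
    (d : ℕ) (hd : 1 ≤ d) (D : Set (Fin d → ℝ)) (hD : IsOpen D)
    (K : (Fin d → ℝ) → ℝ) (hK : ContDiffOn ℝ (⊤ : ℕ∞) K D)
    (G : (Fin d → ℝ) × (Fin d → ℝ) → ℝ) (hG : ContDiff ℝ (⊤ : ℕ∞) G)
    (hGper : ∀ θ r (l : Fin d → ℤ), G (θ + (fun j => 2 * π * (l j : ℝ)), r) = G (θ, r))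
    (F : Set (Fin d → ℝ)) (hF : IsCompact F) (hFD : F ⊆ D)
    (hGsupp : ∀ θ r, r ∉ F → G (θ, r) = 0)
    (κ ε₀ : ℝ) (hκ0 : 0 < κ) (hκ1 : κ ≤ 1) (hε₀0 : 0 < ε₀) (hε₀1 : ε₀ < 1)
    (hsmall : ((2 * d : ℕ) : ℝ≥0∞) *
        eHolder 1 {p : (Fin d → ℝ) × (Fin d → ℝ) | κ • p.2 ∈ D} (sgradScaled κ G)
      ≤ ENNReal.ofReal ε₀)
    (hsep : ∃ b : ℝ, 0 ≤ b ∧ (∀ p, ‖gradθ G p‖ ≤ b) ∧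
        ∀ x ∈ F, ∀ y, y ∉ D → b < dist x y) :
    ∃ W P : (Fin d → ℝ) × (Fin d → ℝ) → (Fin d → ℝ) × (Fin d → ℝ),
      -- (a) the map generated by ⟨θ,r⟩ - G :
      (∀ r ∈ D, Function.Bijective (fun θ : Fin d → ℝ => θ - gradr G (θ, r))) ∧
      ContDiffOn ℝ (⊤ : ℕ∞) W (univ ×ˢ D) ∧
      (∀ θ r (l : Fin d → ℤ), r ∈ D →
          W (θ + (fun j => 2 * π * (l j : ℝ)), r)
            = ((W (θ, r)).1 + (fun j => 2 * π * (l j : ℝ)), (W (θ, r)).2)) ∧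
      (∀ θ, ∀ r ∈ D, W (θ - gradr G (θ, r), r) = (θ, r - gradθ G (θ, r))) ∧
      (∀ θ, ∀ r ∈ D, r ∉ F → W (θ, r) = (θ, r)) ∧
      -- uniqueness of `W` on `𝕋^d × D`
      (∀ W' : (Fin d → ℝ) × (Fin d → ℝ) → (Fin d → ℝ) × (Fin d → ℝ),
          (∀ θ, ∀ r ∈ D, W' (θ - gradr G (θ, r), r) = (θ, r - gradθ G (θ, r))) →
          ∀ θ, ∀ r ∈ D, W' (θ, r) = W (θ, r)) ∧
      -- (b) the map generated by ⟨θ,r⟩ - K(r) - G :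
      (∀ r ∈ D, Function.Bijective
          (fun θ : Fin d → ℝ => θ - gradv K r - gradr G (θ, r))) ∧
      ContDiffOn ℝ (⊤ : ℕ∞) P (univ ×ˢ D) ∧
      (∀ θ, ∀ r ∈ D,
          P (θ - gradv K r - gradr G (θ, r), r) = (θ, r - gradθ G (θ, r))) ∧
      -- (c) `P = W ∘ Q` with `Q(θ,r) = (θ + ∇K(r), r)` :
      (∀ θ, ∀ r ∈ D, P (θ, r) = W (θ + gradv K r, r)) := by
  classical
  have h1top : ((⊤:ℕ∞) : WithTop ℕ∞) ≠ 0 := by simp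
  have hκ : κ ≠ 0 := ne_of_gt hκ0
  have hdr : (1:ℝ) ≤ (d:ℝ) := by exact_mod_cast hd
  have h2d : (0:ℝ) < 2 * d := by linarith
  set c : ℝ := ε₀ / (2 * d) with hc
  have hc0 : 0 ≤ c := by positivity
  have hc1 : c < 1 := by
    rw [hc, div_lt_one h2d]; nlinarith
  set s : Set ((Fin d → ℝ) × (Fin d → ℝ)) := {p | κ • p.2 ∈ D} with hs
  have hsopen : IsOpen s := hD.preimage (continuous_snd.const_smul κ)
  -- reduction of the smallness hypothesis
  have hEH : eHolder 1 s (sgradScaled κ G) ≤ ENNReal.ofReal c := by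
    have hne0 : ((2 * d : ℕ) : ℝ≥0∞) ≠ 0 := by
      simp only [ne_eq, Nat.cast_eq_zero]; omega
    have hnetop : ((2 * d : ℕ) : ℝ≥0∞) ≠ ⊤ := ENNReal.natCast_ne_top _
    have h1 : eHolder 1 s (sgradScaled κ G) ≤ ENNReal.ofReal ε₀ / ((2 * d : ℕ) : ℝ≥0∞) := by
      rw [ENNReal.le_div_iff_mul_le (Or.inl hne0) (Or.inl hnetop), mul_comm]
      exact hsmall
    refine h1.trans (le_of_eq ?_)
    rw [hc, ENNReal.ofReal_div_of_pos h2d]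
    congr 1
    rw [← ENNReal.ofReal_natCast (2 * d)]
    congr 1
    push_cast; ring
  have hgnorm : ∀ x ∈ s, ‖fderiv ℝ (sgradScaled κ G) x‖ ≤ c :=
    fun x hx => norm_fderiv_le_of_eHolder hsopen hc0 hEH hx
  have hDf : ∀ θ r v : Fin d → ℝ, r ∈ D → ‖fderiv ℝ (gradr G) (θ, r) (v, 0)‖ ≤ c * ‖v‖ := by
    intro θ r v hr
    rw [fderiv_sgradScaled_fst hκ hG θ r v]
    have hx : ((θ, κ⁻¹ • r) : (Fin d → ℝ) × (Fin d → ℝ)) ∈ s := by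
      simp only [hs, mem_setOf_eq, smul_smul, mul_inv_cancel₀ hκ, one_smul]; exact hr
    have h2 := (fderiv ℝ (sgradScaled κ G) (θ, κ⁻¹ • r)).le_opNorm (v, (0 : Fin d → ℝ))
    have h3 : ‖((v, (0 : Fin d → ℝ)) : (Fin d → ℝ) × (Fin d → ℝ))‖ = ‖v‖ := by
      rw [Prod.norm_def]
      simp [max_eq_left (norm_nonneg v)]
    rw [h3] at h2
    exact (norm_fst_le _).trans
      (h2.trans (mul_le_mul_of_nonneg_right (hgnorm _ hx) (norm_nonneg v)))
  -- vanishing outside F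
  have hzero : ∀ (θ r : Fin d → ℝ), r ∉ F → fderiv ℝ G (θ, r) = 0 := by
    intro θ r hr
    have hopen : IsOpen ((Prod.snd ⁻¹' F : Set ((Fin d → ℝ) × (Fin d → ℝ))))ᶜ :=
      (hF.isClosed.preimage continuous_snd).isOpen_compl
    have hev : G =ᶠ[nhds ((θ, r) : (Fin d → ℝ) × (Fin d → ℝ))] fun _ => (0 : ℝ) := by
      filter_upwards [hopen.mem_nhds hr] with p hp
      exact hGsupp p.1 p.2 hp
    rw [hev.fderiv_eq]
    exact fderiv_const_apply 0
  have hgr0 : ∀ θ r, r ∉ F → gradr G (θ, r) = 0 := by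
    intro θ r hr; funext j; simp [gradr, hzero θ r hr]
  have hgθ0 : ∀ θ r, r ∉ F → gradθ G (θ, r) = 0 := by
    intro θ r hr; funext j; simp [gradθ, hzero θ r hr]
  -- Lipschitz bound in θ
  have hlip : ∀ r : Fin d → ℝ, LipschitzWith c.toNNReal (fun θ => gradr G (θ, r)) := by
    intro r
    by_cases hrD : r ∈ D
    · refine lipschitzWith_of_nnnorm_fderiv_le
        (((contDiff_gradr hG).differentiable h1top).comp
          (differentiable_id.prodMk (differentiable_const r))) fun θ => ?_
      have hcomp : HasFDerivAt (fun θ : Fin d → ℝ => gradr G (θ, r))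
          ((fderiv ℝ (gradr G) (θ, r)).comp
            (ContinuousLinearMap.inl ℝ (Fin d → ℝ) (Fin d → ℝ))) θ :=
        by have := (((contDiff_gradr hG).differentiable h1top (θ, r)).hasFDerivAt).comp θ
             (hasFDerivAt_prodMk_left (𝕜 := ℝ) θ r); exact this
      rw [hcomp.fderiv]
      have hop : ‖(fderiv ℝ (gradr G) (θ, r)).comp
          (ContinuousLinearMap.inl ℝ (Fin d → ℝ) (Fin d → ℝ))‖ ≤ c := by
        refine ContinuousLinearMap.opNorm_le_bound _ hc0 fun v => ?_
        exact hDf θ r v hrD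
      rw [← norm_toNNReal]
      exact Real.toNNReal_mono hop
    · have hzero' : (fun θ : Fin d → ℝ => gradr G (θ, r)) = fun _ => 0 :=
        funext fun θ => hgr0 θ r (fun h => hrD (hFD h))
      rw [hzero']
      exact (LipschitzWith.const (0 : Fin d → ℝ)).weaken zero_le
  -- bijectivity of the shear for every r
  have hK1 : c.toNNReal < 1 := by
    have h1 : (c.toNNReal : ℝ) < 1 := by rw [Real.coe_toNNReal c hc0]; exact hc1
    exact_mod_cast h1
  have hbij : ∀ r : Fin d → ℝ, Function.Bijective
      (fun θ : Fin d → ℝ => θ - gradr G (θ, r)) := by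
    intro r
    constructor
    · intro θ₁ θ₂ h
      by_contra hne
      have heq : θ₁ - θ₂ = gradr G (θ₁, r) - gradr G (θ₂, r) :=
        sub_eq_sub_iff_sub_eq_sub.1 h
      have hd1 : dist (gradr G (θ₁, r)) (gradr G (θ₂, r)) ≤ c * dist θ₁ θ₂ := by
        have h2 := (hlip r).dist_le_mul θ₁ θ₂
        rwa [Real.coe_toNNReal c hc0] at h2
      have hpos : 0 < dist θ₁ θ₂ := dist_pos.2 hne
      have hle : dist θ₁ θ₂ ≤ c * dist θ₁ θ₂ := by
        calc dist θ₁ θ₂ = dist (gradr G (θ₁, r)) (gradr G (θ₂, r)) := by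
              rw [dist_eq_norm, dist_eq_norm, heq]
          _ ≤ c * dist θ₁ θ₂ := hd1
      nlinarith
    · intro y
      have hiso : Isometry (fun x : Fin d → ℝ => y + x) :=
        Isometry.of_dist_eq fun a b => dist_add_left y a b
      have hlip2 : LipschitzWith c.toNNReal (fun θ : Fin d → ℝ => y + gradr G (θ, r)) := by
        have := hiso.lipschitz.comp (hlip r)
        rwa [one_mul] at this
      have hcontr : ContractingWith c.toNNReal
          (fun θ : Fin d → ℝ => y + gradr G (θ, r)) := ⟨hK1, hlip2⟩
      refine ⟨hcontr.fixedPoint _, ?_⟩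
      have hθ := hcontr.fixedPoint_isFixedPt
      show hcontr.fixedPoint _ - gradr G (hcontr.fixedPoint _, r) = y
      have hθ' : y + gradr G (hcontr.fixedPoint _, r) = hcontr.fixedPoint _ := hθ
      rw [sub_eq_iff_eq_add]
      exact hθ'.symm
  set Φ : (Fin d → ℝ) × (Fin d → ℝ) → (Fin d → ℝ) × (Fin d → ℝ) :=
    fun p => (p.1 - gradr G p, p.2) with hΦdef
  have hΦbij : Function.Bijective Φ := by
    constructor
    · rintro ⟨θ₁, r₁⟩ ⟨θ₂, r₂⟩ h
      have h2 : r₁ = r₂ := congrArg Prod.snd h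
      subst h2
      have h1 : θ₁ - gradr G (θ₁, r₁) = θ₂ - gradr G (θ₂, r₁) := congrArg Prod.fst h
      exact Prod.ext ((hbij r₁).1 h1) rfl
    · rintro ⟨y, r⟩
      obtain ⟨θ, hθ⟩ := (hbij r).2 y
      exact ⟨(θ, r), Prod.ext hθ rfl⟩
  set Ψ := Function.invFun Φ with hΨdef
  have hΨΦ : ∀ p, Ψ (Φ p) = p := fun p => Function.leftInverse_invFun hΦbij.1 p
  have hΦΨ : ∀ p, Φ (Ψ p) = p := fun p => Function.rightInverse_invFun hΦbij.2 p
  have hΨ2 : ∀ p, (Ψ p).2 = p.2 := fun p => (Prod.ext_iff.1 (hΦΨ p)).2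
  have hΦdiff : ContDiff ℝ (⊤:ℕ∞) Φ := (contDiff_fst.sub (contDiff_gradr hG)).prodMk contDiff_snd
  -- smoothness of the inverse over D
  have hΨsmooth : ∀ p : (Fin d → ℝ) × (Fin d → ℝ), p.2 ∈ D → ContDiffAt ℝ (⊤:ℕ∞) Ψ p := by
    intro p hp
    set a := Ψ p with ha
    have haΨ : Φ a = p := hΦΨ p
    have ha2 : a.2 ∈ D := by
      have h2 : a.2 = p.2 := (Prod.ext_iff.1 haΨ).2
      rw [h2]; exact hp
    set Dfa := fderiv ℝ (gradr G) a with hDfa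
    set B₁ : (Fin d → ℝ) →L[ℝ] (Fin d → ℝ) :=
      Dfa.comp (ContinuousLinearMap.inl ℝ (Fin d → ℝ) (Fin d → ℝ)) with hB₁
    have hB₁le : ‖B₁‖ ≤ c := by
      refine ContinuousLinearMap.opNorm_le_bound _ hc0 fun v => ?_
      have h1 : B₁ v = Dfa (v, 0) := rfl
      rw [h1, hDfa]
      exact hDf a.1 a.2 v ha2
    have hB₁norm : ‖B₁‖ < 1 := lt_of_le_of_lt hB₁le hc1
    set u : ((Fin d → ℝ) →L[ℝ] (Fin d → ℝ))ˣ := Units.oneSub B₁ hB₁norm with hu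
    set J : (Fin d → ℝ) →L[ℝ] (Fin d → ℝ) := ↑u⁻¹ with hJ
    have hval : (↑u : (Fin d → ℝ) →L[ℝ] (Fin d → ℝ)) = 1 - B₁ := by
      rw [hu, Units.val_oneSub]
    have hJ1 : ∀ v, J (v - B₁ v) = v := by
      intro v
      have h0 : (↑u⁻¹ * ↑u : (Fin d → ℝ) →L[ℝ] (Fin d → ℝ)) = 1 := u.inv_mul
      rw [hval] at h0
      have h1 := congrArg (fun T : (Fin d → ℝ) →L[ℝ] (Fin d → ℝ) => T v) h0
      simpa [ContinuousLinearMap.mul_apply, ContinuousLinearMap.sub_apply,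
        ContinuousLinearMap.one_apply] using h1
    have hJ2 : ∀ v, J v - B₁ (J v) = v := by
      intro v
      have h0 : (↑u * ↑u⁻¹ : (Fin d → ℝ) →L[ℝ] (Fin d → ℝ)) = 1 := u.mul_inv
      rw [hval] at h0
      have h1 := congrArg (fun T : (Fin d → ℝ) →L[ℝ] (Fin d → ℝ) => T v) h0
      simpa [ContinuousLinearMap.mul_apply, ContinuousLinearMap.sub_apply,
        ContinuousLinearMap.one_apply] using h1
    set B₂ : (Fin d → ℝ) →L[ℝ] (Fin d → ℝ) :=
      Dfa.comp (ContinuousLinearMap.inr ℝ (Fin d → ℝ) (Fin d → ℝ)) with hB₂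
    have hsplit : ∀ v w : Fin d → ℝ, Dfa (v, w) = B₁ v + B₂ w := by
      intro v w
      have h1 : ((v, w) : (Fin d → ℝ) × (Fin d → ℝ)) = (v, 0) + (0, w) := by
        rw [Prod.mk_add_mk, add_zero, zero_add]
      rw [h1, map_add]; rfl
    set T : ((Fin d → ℝ) × (Fin d → ℝ)) →L[ℝ] ((Fin d → ℝ) × (Fin d → ℝ)) :=
      ((ContinuousLinearMap.fst ℝ (Fin d → ℝ) (Fin d → ℝ)) - Dfa).prod
        (ContinuousLinearMap.snd ℝ (Fin d → ℝ) (Fin d → ℝ)) with hT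
    set S : ((Fin d → ℝ) × (Fin d → ℝ)) →L[ℝ] ((Fin d → ℝ) × (Fin d → ℝ)) :=
      (J.comp ((ContinuousLinearMap.fst ℝ (Fin d → ℝ) (Fin d → ℝ)) +
        B₂.comp (ContinuousLinearMap.snd ℝ (Fin d → ℝ) (Fin d → ℝ)))).prod
        (ContinuousLinearMap.snd ℝ (Fin d → ℝ) (Fin d → ℝ)) with hS
    have hTapp : ∀ q : (Fin d → ℝ) × (Fin d → ℝ), T q = (q.1 - Dfa q, q.2) := fun q => rfl
    have hSapp : ∀ q : (Fin d → ℝ) × (Fin d → ℝ), S q = (J (q.1 + B₂ q.2), q.2) := fun q => rfl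
    have hST : ∀ q, S (T q) = q := by
      rintro ⟨v, w⟩
      rw [hTapp, hSapp]
      refine Prod.ext ?_ rfl
      show J (v - Dfa (v, w) + B₂ w) = v
      rw [hsplit]
      have h1 : v - (B₁ v + B₂ w) + B₂ w = v - B₁ v := by abel
      rw [h1, hJ1]
    have hTS : ∀ q, T (S q) = q := by
      rintro ⟨v, w⟩
      rw [hSapp, hTapp]
      refine Prod.ext ?_ rfl
      show J (v + B₂ w) - Dfa (J (v + B₂ w), w) = v
      rw [hsplit]
      have h1 : J (v + B₂ w) - (B₁ (J (v + B₂ w)) + B₂ w)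
          = (J (v + B₂ w) - B₁ (J (v + B₂ w))) - B₂ w := by abel
      rw [h1, hJ2, add_sub_cancel_right]
    set Teq : ((Fin d → ℝ) × (Fin d → ℝ)) ≃L[ℝ] ((Fin d → ℝ) × (Fin d → ℝ)) :=
      ContinuousLinearEquiv.equivOfInverse T S hST hTS with hTeq
    have hfdΦ : HasFDerivAt Φ
        (Teq : ((Fin d → ℝ) × (Fin d → ℝ)) →L[ℝ] ((Fin d → ℝ) × (Fin d → ℝ))) a := by
      have h1 : HasFDerivAt (fun q : (Fin d → ℝ) × (Fin d → ℝ) => q.1 - gradr G q)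
          ((ContinuousLinearMap.fst ℝ (Fin d → ℝ) (Fin d → ℝ)) - Dfa) a :=
        (hasFDerivAt_fst).sub (((contDiff_gradr hG).differentiable h1top a).hasFDerivAt)
      have h2 := h1.prodMk (hasFDerivAt_snd)
      have h3 : (Teq : ((Fin d → ℝ) × (Fin d → ℝ)) →L[ℝ] ((Fin d → ℝ) × (Fin d → ℝ))) = T := rfl
      rw [h3, hT]
      exact h2
    have cda : ContDiffAt ℝ (⊤:ℕ∞) Φ a := hΦdiff.contDiffAt
    have hloc := cda.to_localInverse (f' := Teq) hfdΦ h1top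
    rw [haΨ] at hloc
    refine hloc.congr_of_eventuallyEq ?_
    have hev : ∀ᶠ y in nhds (Φ a), Φ ((cda.localInverse hfdΦ h1top) y) = y :=
      (cda.hasStrictFDerivAt' hfdΦ h1top).eventually_right_inverse
    rw [haΨ] at hev
    filter_upwards [hev] with y hy
    calc Ψ y = Ψ (Φ (cda.localInverse hfdΦ h1top y)) := by rw [hy]
      _ = cda.localInverse hfdΦ h1top y := hΨΦ _
  -- periodicity
  have hper : ∀ (l : Fin d → ℤ) (p : (Fin d → ℝ) × (Fin d → ℝ)),
      fderiv ℝ G (p.1 + (fun j => 2 * π * (l j : ℝ)), p.2) = fderiv ℝ G p := by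
    intro l p
    set t : (Fin d → ℝ) × (Fin d → ℝ) := ((fun j => 2 * π * (l j : ℝ)), 0) with ht
    have hqt : ∀ q : (Fin d → ℝ) × (Fin d → ℝ),
        q + t = (q.1 + (fun j => 2 * π * (l j : ℝ)), q.2) := by
      intro q
      refine Prod.ext rfl ?_
      show q.2 + 0 = q.2
      exact add_zero _
    have hfun : (G ∘ fun q : (Fin d → ℝ) × (Fin d → ℝ) => q + t) = G := by
      funext q
      show G (q + t) = G q
      rw [hqt q]
      exact hGper q.1 q.2 l
    have hinner : HasFDerivAt (fun q : (Fin d → ℝ) × (Fin d → ℝ) => q + t)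
        (ContinuousLinearMap.id ℝ ((Fin d → ℝ) × (Fin d → ℝ))) p :=
      (hasFDerivAt_id p).add_const t
    have hcompos := ((hG.differentiable h1top (p + t)).hasFDerivAt).comp p hinner
    rw [ContinuousLinearMap.comp_id] at hcompos
    rw [hfun] at hcompos
    rw [show ((p.1 + fun j => 2 * π * (l j : ℝ), p.2) : (Fin d → ℝ) × (Fin d → ℝ)) = p + t from
      (hqt p).symm]
    exact (hcompos.fderiv).symm
  have hgrper : ∀ (l : Fin d → ℤ) θ r, gradr G (θ + (fun j => 2 * π * (l j : ℝ)), r)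
      = gradr G (θ, r) := by
    intro l θ r; funext j; simp only [gradr]; rw [hper l (θ, r)]
  have hgθper : ∀ (l : Fin d → ℤ) θ r, gradθ G (θ + (fun j => 2 * π * (l j : ℝ)), r)
      = gradθ G (θ, r) := by
    intro l θ r; funext j; simp only [gradθ]; rw [hper l (θ, r)]
  have hΦtrans : ∀ (l : Fin d → ℤ) (θ r : Fin d → ℝ),
      Φ (θ + (fun j => 2 * π * (l j : ℝ)), r)
        = ((Φ (θ, r)).1 + (fun j => 2 * π * (l j : ℝ)), (Φ (θ, r)).2) := by
    intro l θ r
    simp only [hΦdef]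
    rw [hgrper]
    refine Prod.ext ?_ rfl
    show θ + _ - gradr G (θ, r) = θ - gradr G (θ, r) + _
    abel
  have hΨtrans : ∀ (l : Fin d → ℤ) (θ r : Fin d → ℝ),
      Ψ (θ + (fun j => 2 * π * (l j : ℝ)), r)
        = ((Ψ (θ, r)).1 + (fun j => 2 * π * (l j : ℝ)), (Ψ (θ, r)).2) := by
    intro l θ r
    apply hΦbij.1
    rw [hΦΨ]
    have h1 : Φ ((Ψ (θ, r)).1 + (fun j => 2 * π * (l j : ℝ)), (Ψ (θ, r)).2)
        = ((Φ (Ψ (θ, r))).1 + (fun j => 2 * π * (l j : ℝ)), (Φ (Ψ (θ, r))).2) := by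
      have := hΦtrans l (Ψ (θ, r)).1 (Ψ (θ, r)).2
      simpa using this
    rw [h1, hΦΨ]
  -- the maps
  set W : (Fin d → ℝ) × (Fin d → ℝ) → (Fin d → ℝ) × (Fin d → ℝ) :=
    fun p => ((Ψ p).1, p.2 - gradθ G (Ψ p)) with hWdef
  set P : (Fin d → ℝ) × (Fin d → ℝ) → (Fin d → ℝ) × (Fin d → ℝ) :=
    fun p => W (p.1 + gradv K p.2, p.2) with hPdef
  have hgen : ∀ θ, ∀ r ∈ D, W (θ - gradr G (θ, r), r) = (θ, r - gradθ G (θ, r)) := by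
    intro θ r _
    have h1 : ((θ - gradr G (θ, r), r) : (Fin d → ℝ) × (Fin d → ℝ)) = Φ (θ, r) := rfl
    rw [h1]
    show ((Ψ (Φ (θ, r))).1, (Φ (θ, r)).2 - gradθ G (Ψ (Φ (θ, r)))) = _
    rw [hΨΦ]
  have hWsmooth : ContDiffOn ℝ (⊤ : ℕ∞) W (univ ×ˢ D) := by
    intro p hp
    have hp2 : p.2 ∈ D := hp.2
    have hΨp := hΨsmooth p hp2
    exact ((contDiffAt_fst.comp p hΨp).prodMk
      (contDiffAt_snd.sub ((contDiff_gradθ hG).contDiffAt.comp p hΨp))).contDiffWithinAt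
  refine ⟨W, P, fun r _ => hbij r, hWsmooth, ?_, hgen, ?_, ?_, ?_, ?_, ?_, ?_⟩
  · -- periodicity of W
    intro θ r l _
    simp only [hWdef]
    rw [hΨtrans]
    refine Prod.ext rfl ?_
    show r - gradθ G _ = r - gradθ G _
    rw [hgθper]
  · -- W = id outside F
    intro θ r _ hnF
    have h1 : Φ (θ, r) = (θ, r) := by
      simp only [hΦdef]; rw [hgr0 θ r hnF]; simp
    have h2 : Ψ (θ, r) = (θ, r) := by
      conv_lhs => rw [← h1]
      exact hΨΦ _
    simp only [hWdef, h2, hgθ0 θ r hnF, sub_zero]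
  · -- uniqueness
    intro W' hW' θ' r hr
    rcases haΨ : Ψ (θ', r) with ⟨a1, a2⟩
    have hfa : Φ (a1, a2) = (θ', r) := by rw [← haΨ]; exact hΦΨ _
    have ha2 : a2 = r := (Prod.ext_iff.1 hfa).2
    subst ha2
    have h1 : a1 - gradr G (a1, a2) = θ' := (Prod.ext_iff.1 hfa).1
    have h2 := hW' a1 a2 hr
    rw [h1] at h2
    rw [h2]
    show (a1, a2 - gradθ G (a1, a2)) = ((Ψ (θ', a2)).1, a2 - gradθ G (Ψ (θ', a2)))
    rw [haΨ]
  · -- bijectivity for P's shear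
    intro r hr
    have heq : (fun θ : Fin d → ℝ => θ - gradv K r - gradr G (θ, r))
        = (fun x => x - gradv K r) ∘ (fun θ : Fin d → ℝ => θ - gradr G (θ, r)) := by
      funext θ; show _ = θ - gradr G (θ, r) - gradv K r; abel
    rw [heq]
    exact (Equiv.subRight (gradv K r)).bijective.comp (hbij r)
  · -- smoothness of P
    have hKgrad : ContDiffOn ℝ (⊤ : ℕ∞) (gradv K) D := by
      have hfdK : ContDiffOn ℝ (⊤:ℕ∞) (fderiv ℝ K) D := by
        have h1 := hK.fderivWithin (m := ((⊤:ℕ∞) : WithTop ℕ∞)) hD.uniqueDiffOn (by simp)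
        refine h1.congr fun x hx => ?_
        exact (fderivWithin_of_isOpen hD hx).symm
      exact contDiffOn_pi.2 fun j => hfdK.clm_apply contDiffOn_const
    have hQ : ContDiffOn ℝ (⊤:ℕ∞)
        (fun p : (Fin d → ℝ) × (Fin d → ℝ) => (p.1 + gradv K p.2, p.2)) (univ ×ˢ D) :=
      ((contDiff_fst.contDiffOn).add (hKgrad.comp contDiff_snd.contDiffOn
        fun p hp => hp.2)).prodMk contDiff_snd.contDiffOn
    have hmaps : MapsTo (fun p : (Fin d → ℝ) × (Fin d → ℝ) => (p.1 + gradv K p.2, p.2))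
        (univ ×ˢ D) (univ ×ˢ D) := fun p hp => ⟨trivial, hp.2⟩
    exact hWsmooth.comp hQ hmaps
  · -- generating relation for P
    intro θ r hr
    show W (θ - gradv K r - gradr G (θ, r) + gradv K r, r) = _
    have harg : θ - gradv K r - gradr G (θ, r) + gradv K r = θ - gradr G (θ, r) := by abel
    rw [harg]
    exact hgen θ r hr
  · intro θ r _
    rfl
end
end
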